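/- arXiv:1908.04497 — 2 statements merged into one kernel-verified Lean document; each statement's English description precedes it below -/
import Mathlib

section
/- Let N = (S, C, R) be a deficiency-one chemical reaction network and suppose (N, K) is a power law kinetic system with reactant-determined interactions (PL-RDK) with T-matrix T that admits a positive equilibrium c* ∈ ℝ^S_{>0}. If y, y' ∈ C are nonterminal complexes, then every positive equilibrium c** ∈ ℝ^S_{>0} of the system satisfies (T_{·,y} − T_{·,y'}) · log(c**/c*) = 0, where log(c**/c*) is the vector with components log(c**_i / c*_i). -/
open scoped BigOperators Classical

/-- A chemical reaction network (CRN) on a finite species set `S`: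
complexes are non-negative vectors in `ℝ^S`, reactions are pairs of complexes,
no reaction is a self-loop, and every complex occurs in some reaction. -/
structure CRN (S : Type*) [Fintype S] where
  complexes : Finset (S → ℝ)
  reactions : Finset ((S → ℝ) × (S → ℝ))
  complexes_nonneg : ∀ y ∈ complexes, ∀ i, 0 ≤ y i
  mem_source : ∀ r ∈ reactions, r.1 ∈ complexes
  mem_target : ∀ r ∈ reactions, r.2 ∈ complexes
  ne_of_mem : ∀ r ∈ reactions, r.1 ≠ r.2
  cover : ∀ y ∈ complexes, ∃ y', (y, y') ∈ reactions ∨ (y', y) ∈ reactions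

namespace CRN

variable {S : Type*} [Fintype S] (N : CRN S)

/-- One-step reaction relation on complexes. -/
def step (y y' : S → ℝ) : Prop := (y, y') ∈ N.reactions

/-- Reachability along directed reactions. -/
def reach : (S → ℝ) → (S → ℝ) → Prop := Relation.ReflTransGen N.step

/-- A complex is terminal iff it belongs to a terminal strong linkage class,
i.e. everything reachable from it can reach it back. -/
def IsTerminal (y : S → ℝ) : Prop :=
  y ∈ N.complexes ∧ ∀ y', N.reach y y' → N.reach y' y

/-- A nonterminal complex. -/
def Nonterminal (y : S → ℝ) : Prop := y ∈ N.complexes ∧ ¬ N.IsTerminal y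

/-- The set of terminal strong linkage classes. -/
def tslc : Set (Set (S → ℝ)) :=
  {L | ∃ y, N.IsTerminal y ∧ L = {y' | N.reach y y' ∧ N.reach y' y}}

/-- The number `t` of terminal strong linkage classes. -/
noncomputable def numTSLC : ℕ := Nat.card N.tslc

/-- Undirected connectivity (for linkage classes). -/
def linked : (S → ℝ) → (S → ℝ) → Prop :=
  Relation.ReflTransGen (fun a b => (a, b) ∈ N.reactions ∨ (b, a) ∈ N.reactions)

/-- The set of linkage classes (connected components of the reaction digraph). -/
def linkageClasses : Set (Set (S → ℝ)) :=
  {L | ∃ y ∈ N.complexes, L = {y' | y' ∈ N.complexes ∧ N.linked y y'}}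

/-- The number `ℓ` of linkage classes. -/
noncomputable def numLinkageClasses : ℕ := Nat.card N.linkageClasses

/-- The stoichiometric subspace `S = span{y' - y : y → y'}`. -/
def stoichSubspace : Submodule ℝ (S → ℝ) :=
  Submodule.span ℝ {v | ∃ r ∈ N.reactions, v = r.2 - r.1}

/-- The rank `s` of the network. -/
noncomputable def rank : ℕ := Module.finrank ℝ N.stoichSubspace

/-- The deficiency `δ = n - ℓ - s`. -/
noncomputable def deficiency : ℤ :=
  (N.complexes.card : ℤ) - N.numLinkageClasses - N.rank

/-- The map of complexes `Y : ℝ^C → ℝ^S`, sending `ω_y ↦ y`. -/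
noncomputable def mapY : (↥N.complexes → ℝ) →ₗ[ℝ] (S → ℝ) :=
  ∑ y : ↥N.complexes, (LinearMap.proj y).smulRight (y : S → ℝ)

/-- The incidence map `I_a : ℝ^R → ℝ^C`, sending `ω_{y→y'} ↦ ω_{y'} - ω_y`. -/
noncomputable def incidence : (↥N.reactions → ℝ) →ₗ[ℝ] (↥N.complexes → ℝ) :=
  ∑ r : ↥N.reactions,
    (LinearMap.proj r).smulRight
      (Pi.single (⟨r.1.2, N.mem_target r.1 r.2⟩ : ↥N.complexes) 1
        - Pi.single (⟨r.1.1, N.mem_source r.1 r.2⟩ : ↥N.complexes) 1)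

/-- The Laplacian map `A_k x = Σ_{y→y'} k_{y→y'} x_y (ω_{y'} - ω_y)`. -/
noncomputable def laplacian (k : ↥N.reactions → ℝ) :
    (↥N.complexes → ℝ) →ₗ[ℝ] (↥N.complexes → ℝ) :=
  ∑ r : ↥N.reactions, k r •
    ((LinearMap.proj (⟨r.1.1, N.mem_source r.1 r.2⟩ : ↥N.complexes)).smulRight
      (Pi.single (⟨r.1.2, N.mem_target r.1 r.2⟩ : ↥N.complexes) 1
        - Pi.single (⟨r.1.1, N.mem_source r.1 r.2⟩ : ↥N.complexes) 1))

/-- A positive equilibrium of the PL-RDK system with rate constants `k` and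
kinetic-order assignment (T-matrix) `T`. -/
def IsPosEquilibrium (k : ↥N.reactions → ℝ) (T : (S → ℝ) → (S → ℝ)) (c : S → ℝ) : Prop :=
  (∀ i, 0 < c i) ∧
    ∑ r : ↥N.reactions, (k r * ∏ i, (c i) ^ (T r.1.1 i)) • ((r.1.2 : S → ℝ) - r.1.1) = 0

/-- The set of reactant complexes. -/
def reactantSet : Set (S → ℝ) := {y | ∃ y', (y, y') ∈ N.reactions}

/-- The reactant subspace `R = Im Y_res`. -/
def reactantSubspace : Submodule ℝ (S → ℝ) := Submodule.span ℝ N.reactantSet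

/-- The reactant deficiency `δ_ρ = n_r - q`. -/
noncomputable def reactantDeficiency : ℤ :=
  (Nat.card N.reactantSet : ℤ) - Module.finrank ℝ N.reactantSubspace

end CRN

namespace CRNAux

open CRN

variable {S : Type*} [Fintype S] (N : CRN S)

def srcι (r : ↥N.reactions) : ↥N.complexes := ⟨r.1.1, N.mem_source r.1 r.2⟩
def tgtι (r : ↥N.reactions) : ↥N.complexes := ⟨r.1.2, N.mem_target r.1 r.2⟩

noncomputable def gen (r : ↥N.reactions) : ↥N.complexes → ℝ :=
  Pi.single (tgtι N r) 1 - Pi.single (srcι N r) 1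

lemma mapY_apply (x : ↥N.complexes → ℝ) :
    N.mapY x = ∑ y : ↥N.complexes, x y • (y : S → ℝ) := by
  simp [CRN.mapY, LinearMap.sum_apply]

lemma mapY_single (z : ↥N.complexes) : N.mapY (Pi.single z 1) = (z : S → ℝ) := by
  rw [mapY_apply]
  rw [Finset.sum_eq_single z]
  · simp
  · intro y _ hy; simp [Pi.single_apply, hy]
  · simp

lemma mapY_gen (r : ↥N.reactions) : N.mapY (gen N r) = r.1.2 - r.1.1 := by
  simp [gen, map_sub, mapY_single, srcι, tgtι]

lemma gen_apply (r : ↥N.reactions) (q : ↥N.complexes) :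
    gen N r q = (if q = tgtι N r then (1:ℝ) else 0) - (if q = srcι N r then (1:ℝ) else 0) := by
  simp [gen, Pi.single_apply]



noncomputable def inflow (k : ↥N.reactions → ℝ) (x : ↥N.complexes → ℝ) (q : ↥N.complexes) : ℝ :=
  ∑ r : ↥N.reactions, if q = tgtι N r then k r * x (srcι N r) else 0

noncomputable def outd (k : ↥N.reactions → ℝ) (q : ↥N.complexes) : ℝ :=
  ∑ r : ↥N.reactions, if q = srcι N r then k r else 0

lemma balance (k : ↥N.reactions → ℝ) (x : ↥N.complexes → ℝ)
    (hx : ∑ r : ↥N.reactions, (k r * x (srcι N r)) • gen N r = 0) (q : ↥N.complexes) :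
    inflow N k x q = outd N k q * x q := by
  have h := congrFun hx q
  simp only [Finset.sum_apply, Pi.smul_apply, Pi.zero_apply, gen_apply, smul_eq_mul] at h
  have h2 : ∑ r : ↥N.reactions,
      ((if q = tgtι N r then k r * x (srcι N r) else 0)
        - (if q = srcι N r then k r else 0) * x q) = 0 := by
    have hcong : ∀ r ∈ (Finset.univ : Finset ↥N.reactions),
        ((if q = tgtι N r then k r * x (srcι N r) else 0)
          - (if q = srcι N r then k r else 0) * x q)
        = k r * x (srcι N r)
            * ((if q = tgtι N r then (1:ℝ) else 0) - if q = srcι N r then (1:ℝ) else 0) := by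
      intro r _
      by_cases h2 : q = srcι N r
      · rw [h2]; split_ifs <;> ring
      · simp only [h2, if_false]; split_ifs <;> ring
    rw [Finset.sum_congr rfl hcong, h]
  rw [Finset.sum_sub_distrib] at h2
  have : (∑ r : ↥N.reactions, (if q = srcι N r then k r else 0) * x q)
      = outd N k q * x q := by rw [outd, Finset.sum_mul]
  rw [this] at h2
  unfold inflow
  linarith

lemma outd_nonneg (k : ↥N.reactions → ℝ) (hk : ∀ r, 0 < k r) (q : ↥N.complexes) :
    0 ≤ outd N k q := by
  apply Finset.sum_nonneg
  intro r _
  split_ifs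
  · exact (hk r).le
  · exact le_refl 0

lemma sum_inflow (k : ↥N.reactions → ℝ) (μ : ↥N.complexes → ℝ) :
    ∑ q : ↥N.complexes, inflow N k μ q = ∑ r : ↥N.reactions, k r * μ (srcι N r) := by
  unfold inflow
  rw [Finset.sum_comm]
  apply Finset.sum_congr rfl
  intro r _
  simp

lemma sum_out (k : ↥N.reactions → ℝ) (μ : ↥N.complexes → ℝ) :
    ∑ q : ↥N.complexes, outd N k q * μ q = ∑ r : ↥N.reactions, k r * μ (srcι N r) := by
  unfold outd
  simp only [Finset.sum_mul, ite_mul, zero_mul]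
  rw [Finset.sum_comm]
  apply Finset.sum_congr rfl
  intro r _
  simp

lemma abs_balance (k : ↥N.reactions → ℝ) (hk : ∀ r, 0 < k r) (x : ↥N.complexes → ℝ)
    (hb : ∀ q, inflow N k x q = outd N k q * x q) (q : ↥N.complexes) :
    inflow N k (fun z => |x z|) q = outd N k q * |x q| := by
  have key : ∀ p : ↥N.complexes, 0 ≤ inflow N k (fun z => |x z|) p - outd N k p * |x p| := by
    intro p
    have h1 : |inflow N k x p| ≤ inflow N k (fun z => |x z|) p := by
      refine le_trans (Finset.abs_sum_le_sum_abs _ _) ?_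
      apply Finset.sum_le_sum
      intro r _
      split_ifs with h
      · rw [abs_mul, abs_of_pos (hk r)]
      · simp
    have h2 : |inflow N k x p| = outd N k p * |x p| := by
      rw [hb p, abs_mul, abs_of_nonneg (outd_nonneg N k hk p)]
    linarith
  have hsum : ∑ p : ↥N.complexes,
      (inflow N k (fun z => |x z|) p - outd N k p * |x p|) = 0 := by
    rw [Finset.sum_sub_distrib, sum_inflow]
    have := sum_out N k (fun z => |x z|)
    rw [this]
    ring
  have hzero := (Finset.sum_eq_zero_iff_of_nonneg (fun p _ => key p)).mp hsum q (Finset.mem_univ q)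
  linarith

lemma step_of_reaction (r : ↥N.reactions) : N.step r.1.1 r.1.2 := by
  show (r.1.1, r.1.2) ∈ N.reactions
  rw [Prod.mk.eta]
  exact r.2

lemma backprop (k : ↥N.reactions → ℝ) (hk : ∀ r, 0 < k r) (μ : ↥N.complexes → ℝ)
    (hμ : ∀ q, 0 ≤ μ q) (hb : ∀ q, inflow N k μ q = outd N k q * μ q)
    (r₀ : ↥N.reactions) (h0 : μ (tgtι N r₀) = 0) : μ (srcι N r₀) = 0 := by
  have h1 : inflow N k μ (tgtι N r₀) = 0 := by rw [hb, h0, mul_zero]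
  have h2 : ∀ r : ↥N.reactions, r ∈ Finset.univ →
      0 ≤ (if tgtι N r₀ = tgtι N r then k r * μ (srcι N r) else 0) := by
    intro r _
    split_ifs
    · exact mul_nonneg (hk r).le (hμ _)
    · exact le_refl 0
  have h3 := (Finset.sum_eq_zero_iff_of_nonneg h2).mp h1 r₀ (Finset.mem_univ r₀)
  rw [if_pos rfl] at h3
  have := (hk r₀).ne'
  exact (mul_eq_zero.mp h3).resolve_left this

lemma boundary (k : ↥N.reactions → ℝ) (hk : ∀ r, 0 < k r) (μ : ↥N.complexes → ℝ)
    (hμ : ∀ q, 0 ≤ μ q) (hb : ∀ q, inflow N k μ q = outd N k q * μ q)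
    (z : ↥N.complexes) (r₁ : ↥N.reactions)
    (h1 : N.reach r₁.1.1 ↑z) (h2 : ¬ N.reach r₁.1.2 ↑z) : μ (srcι N r₁) = 0 := by
  classical
  set F : Finset ↥N.complexes :=
    Finset.univ.filter (fun q => N.reach (↑q) (↑z)) with hF
  have hsum0 : ∑ q ∈ F, (inflow N k μ q - outd N k q * μ q) = 0 :=
    Finset.sum_eq_zero (fun q _ => by rw [hb q, sub_self])
  have hin : ∑ q ∈ F, inflow N k μ q
      = ∑ r : ↥N.reactions, (if N.reach (↑(tgtι N r)) (↑z) then k r * μ (srcι N r) else 0) := by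
    unfold inflow
    rw [Finset.sum_comm]
    apply Finset.sum_congr rfl
    intro r _
    rw [Finset.sum_ite_eq' F (tgtι N r) (fun _ => k r * μ (srcι N r))]
    simp [hF]
  have hout : ∑ q ∈ F, outd N k q * μ q
      = ∑ r : ↥N.reactions, (if N.reach (↑(srcι N r)) (↑z) then k r * μ (srcι N r) else 0) := by
    unfold outd
    simp only [Finset.sum_mul, ite_mul, zero_mul]
    rw [Finset.sum_comm]
    apply Finset.sum_congr rfl
    intro r _
    rw [Finset.sum_ite_eq' F (srcι N r) (fun q => k r * μ q)]
    simp [hF]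
  rw [Finset.sum_sub_distrib, hin, hout, ← Finset.sum_sub_distrib] at hsum0
  have hterm : ∀ r : ↥N.reactions, r ∈ Finset.univ →
      0 ≤ -((if N.reach (↑(tgtι N r)) (↑z) then k r * μ (srcι N r) else 0)
          - (if N.reach (↑(srcι N r)) (↑z) then k r * μ (srcι N r) else 0)) := by
    intro r _
    by_cases hs : N.reach (↑(srcι N r)) (↑z)
    · rw [if_pos hs]
      split_ifs
      · simp
      · simp [mul_nonneg (hk r).le (hμ _)]
    · rw [if_neg hs]
      have ht : ¬ N.reach (↑(tgtι N r)) (↑z) := by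
        intro h
        exact hs (Relation.ReflTransGen.head (step_of_reaction N r) h)
      rw [if_neg ht]
      simp
  have hsumneg : ∑ r : ↥N.reactions,
      -((if N.reach (↑(tgtι N r)) (↑z) then k r * μ (srcι N r) else 0)
        - (if N.reach (↑(srcι N r)) (↑z) then k r * μ (srcι N r) else 0)) = 0 := by
    rw [Finset.sum_neg_distrib, hsum0, neg_zero]
  have h3 := (Finset.sum_eq_zero_iff_of_nonneg hterm).mp hsumneg r₁ (Finset.mem_univ r₁)
  rw [if_neg (show ¬ N.reach (↑(tgtι N r₁)) ↑z from h2),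
    if_pos (show N.reach (↑(srcι N r₁)) ↑z from h1)] at h3
  have h4 : k r₁ * μ (srcι N r₁) = 0 := by linarith
  exact (mul_eq_zero.mp h4).resolve_left (hk r₁).ne'

lemma exists_boundary (z : ↥N.complexes) (hz : ¬ N.IsTerminal ↑z) :
    ∃ r : ↥N.reactions, N.reach r.1.1 ↑z ∧ ¬ N.reach r.1.2 ↑z ∧ N.reach ↑z r.1.1 := by
  have hz2 : ∃ w, N.reach ↑z w ∧ ¬ N.reach w ↑z := by
    by_contra h
    push_neg at h
    exact hz ⟨z.2, fun y' hy' => h y' hy'⟩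
  obtain ⟨w, hw1, hw2⟩ := hz2
  have main : ∀ u, N.reach u w → N.reach u ↑z → N.reach ↑z u →
      ∃ r : ↥N.reactions, N.reach r.1.1 ↑z ∧ ¬ N.reach r.1.2 ↑z ∧ N.reach ↑z r.1.1 := by
    intro u hu
    induction hu using Relation.ReflTransGen.head_induction_on with
    | refl =>
      intro h1 _
      exact absurd h1 hw2
    | @head p c hpc hcw ih =>
      intro h1 h2
      by_cases hc : N.reach c ↑z
      · exact ih hc (Relation.ReflTransGen.tail h2 hpc)
      · exact ⟨⟨(p, c), hpc⟩, h1, hc, h2⟩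
  exact main ↑z hw1 Relation.ReflTransGen.refl Relation.ReflTransGen.refl

lemma zeroprop (k : ↥N.reactions → ℝ) (hk : ∀ r, 0 < k r) (μ : ↥N.complexes → ℝ)
    (hμ : ∀ q, 0 ≤ μ q) (hb : ∀ q, inflow N k μ q = outd N k q * μ q)
    (a : ↥N.complexes) (ha : μ a = 0) :
    ∀ v, N.reach v ↑a → ∀ hvm : v ∈ N.complexes, μ ⟨v, hvm⟩ = 0 := by
  intro v hv
  induction hv using Relation.ReflTransGen.head_induction_on with
  | refl =>
    intro hm
    have he : (⟨↑a, hm⟩ : ↥N.complexes) = a := Subtype.ext rfl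
    rw [he]
    exact ha
  | @head p c hpc hca ih =>
    intro hm
    have hcm : c ∈ N.complexes := N.mem_target (p, c) hpc
    have hc0 : μ ⟨c, hcm⟩ = 0 := ih hcm
    exact backprop N k hk μ hμ hb ⟨(p, c), hpc⟩ hc0

lemma ker_support (k : ↥N.reactions → ℝ) (hk : ∀ r, 0 < k r) (x : ↥N.complexes → ℝ)
    (hx : ∑ r : ↥N.reactions, (k r * x (srcι N r)) • gen N r = 0)
    (z : ↥N.complexes) (hz : ¬ N.IsTerminal ↑z) : x z = 0 := by
  have hb := balance N k x hx
  have hb2 : ∀ q, inflow N k (fun p => |x p|) q = outd N k q * |x q| := abs_balance N k hk x hb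
  have hμ : ∀ q : ↥N.complexes, 0 ≤ |x q| := fun q => abs_nonneg _
  obtain ⟨r₁, h1, h2, h3⟩ := exists_boundary N z hz
  have ha : |x (srcι N r₁)| = 0 := boundary N k hk (fun p => |x p|) hμ hb2 z r₁ h1 h2
  have hz0 : |x z| = 0 :=
    zeroprop N k hk (fun p => |x p|) hμ hb2 (srcι N r₁) ha ↑z h3 z.2
  exact abs_eq_zero.mp hz0

lemma linked_symm : Symmetric N.linked :=
  fun a b h => by
    unfold CRN.linked at h ⊢
    induction h with
    | refl => exact Relation.ReflTransGen.refl
    | tail _ hbc ih => exact Relation.ReflTransGen.head (Or.symm hbc) ih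

def cls (y : S → ℝ) : Set (S → ℝ) := {y' | y' ∈ N.complexes ∧ N.linked y y'}

lemma class_eq {L : Set (S → ℝ)} (hL : L ∈ N.linkageClasses) {y₀ : S → ℝ}
    (hy₀ : y₀ ∈ L) : L = cls N y₀ := by
  obtain ⟨w, hw, rfl⟩ := hL
  obtain ⟨hy₀c, hwy₀⟩ := hy₀
  ext v
  constructor
  · rintro ⟨hv, hwv⟩
    exact ⟨hv, Relation.ReflTransGen.trans (linked_symm N hwy₀) hwv⟩
  · rintro ⟨hv, hyv⟩
    exact ⟨hv, Relation.ReflTransGen.trans hwy₀ hyv⟩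

lemma edge_mem_iff {L : Set (S → ℝ)} (hL : L ∈ N.linkageClasses) (r : ↥N.reactions) :
    r.1.1 ∈ L ↔ r.1.2 ∈ L := by
  obtain ⟨w, hw, rfl⟩ := hL
  constructor
  · rintro ⟨hc, hl⟩
    exact ⟨N.mem_target r.1 r.2, Relation.ReflTransGen.tail hl (Or.inl (step_of_reaction N r))⟩
  · rintro ⟨hc, hl⟩
    exact ⟨N.mem_source r.1 r.2, Relation.ReflTransGen.tail hl (Or.inr (step_of_reaction N r))⟩

lemma lc_finite : N.linkageClasses.Finite := by
  have hsub : N.linkageClasses ⊆ (fun y => cls N y) '' ↑N.complexes := by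
    rintro L ⟨y, hy, rfl⟩
    exact ⟨y, hy, rfl⟩
  exact Set.Finite.subset (N.complexes.finite_toSet.image _) hsub

noncomputable def Phi [Fintype ↥N.linkageClasses] :
    (↥N.complexes → ℝ) →ₗ[ℝ] (↥N.linkageClasses → ℝ) where
  toFun x L := ∑ y ∈ Finset.univ.filter
      (fun y : ↥N.complexes => (y : S → ℝ) ∈ (L : Set (S → ℝ))), x y
  map_add' x z := by
    funext L
    exact Finset.sum_add_distrib
  map_smul' c x := by
    funext L
    simp [Finset.mul_sum]

lemma Phi_single [Fintype ↥N.linkageClasses] (q : ↥N.complexes) (L : ↥N.linkageClasses) :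
    Phi N (Pi.single q 1) L = if (q : S → ℝ) ∈ (L : Set (S → ℝ)) then (1:ℝ) else 0 := by
  have h0 : Phi N (Pi.single q 1) L = ∑ y ∈ Finset.univ.filter
      (fun y : ↥N.complexes => (y : S → ℝ) ∈ (L : Set (S → ℝ))),
      (Pi.single q (1:ℝ) : ↥N.complexes → ℝ) y := rfl
  rw [h0]
  have hterm : ∀ y : ↥N.complexes,
      (Pi.single q (1:ℝ) : ↥N.complexes → ℝ) y = if y = q then 1 else 0 := by
    intro y; simp [Pi.single_apply]
  simp_rw [hterm]
  rw [Finset.sum_ite_eq' _ q (fun _ => (1:ℝ))]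
  simp

lemma D_le_ker [Fintype ↥N.linkageClasses] :
    Submodule.span ℝ (Set.range (gen N)) ≤ LinearMap.ker (Phi N) := by
  rw [Submodule.span_le]
  rintro v ⟨r, rfl⟩
  rw [SetLike.mem_coe, LinearMap.mem_ker]
  have : gen N r = Pi.single (tgtι N r) 1 - Pi.single (srcι N r) 1 := rfl
  rw [this, map_sub]
  funext L
  rw [Pi.sub_apply, Phi_single, Phi_single, Pi.zero_apply]
  have hiff : ((srcι N r : S → ℝ) ∈ (L : Set (S → ℝ)))
      ↔ ((tgtι N r : S → ℝ) ∈ (L : Set (S → ℝ))) := edge_mem_iff N L.2 r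
  by_cases hs : (srcι N r : S → ℝ) ∈ (L : Set (S → ℝ))
  · rw [if_pos hs, if_pos (hiff.mp hs), sub_self]
  · rw [if_neg hs, if_neg (fun ht => hs (hiff.mpr ht)), sub_self]

lemma Phi_surj [Fintype ↥N.linkageClasses] : Function.Surjective (Phi N) := by
  have hsingle : ∀ L : ↥N.linkageClasses, Pi.single L (1:ℝ) ∈ LinearMap.range (Phi N) := by
    intro L
    obtain ⟨y₀, hy₀, hLeq⟩ := L.2
    refine ⟨Pi.single (⟨y₀, hy₀⟩ : ↥N.complexes) 1, ?_⟩
    funext L'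
    rw [Phi_single]
    have hmem : y₀ ∈ (L : Set (S → ℝ)) := by
      rw [hLeq]
      exact ⟨hy₀, Relation.ReflTransGen.refl⟩
    by_cases h : y₀ ∈ (L' : Set (S → ℝ))
    · have heq1 : (L' : Set (S → ℝ)) = cls N y₀ := class_eq N L'.2 h
      have heq2 : (L : Set (S → ℝ)) = cls N y₀ := hLeq
      have hLL : L' = L := Subtype.ext (heq1.trans heq2.symm)
      rw [if_pos h, hLL, Pi.single_eq_same]
    · have hne : L' ≠ L := by
        intro hc
        exact h (hc ▸ hmem)
      rw [if_neg h, Pi.single_eq_of_ne hne]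
  intro f
  have hf : f ∈ LinearMap.range (Phi N) := by
    have hrepr : f = ∑ L : ↥N.linkageClasses,
        f L • (Pi.single L (1:ℝ) : ↥N.linkageClasses → ℝ) := by
      funext j
      rw [Finset.sum_apply]
      have : ∀ L : ↥N.linkageClasses,
          (f L • (Pi.single L (1:ℝ) : ↥N.linkageClasses → ℝ)) j
          = if j = L then f L else 0 := by
        intro L
        rw [Pi.smul_apply, Pi.single_apply]
        split_ifs <;> simp
      simp_rw [this]
      rw [Finset.sum_ite_eq _ j f]
      simp
    rw [hrepr]
    exact Submodule.sum_mem _ (fun L _ => Submodule.smul_mem _ _ (hsingle L))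
  exact hf

lemma finrank_V_le_one (hδ : N.deficiency = 1) :
    Module.finrank ℝ
      ↥(Submodule.span ℝ (Set.range (gen N)) ⊓ LinearMap.ker N.mapY) ≤ 1 := by
  classical
  letI : Fintype ↥N.linkageClasses := (lc_finite N).fintype
  set D := Submodule.span ℝ (Set.range (gen N)) with hD
  set V := D ⊓ LinearMap.ker N.mapY with hV
  -- rank–nullity for Phi
  have hrn : Module.finrank ℝ ↥(LinearMap.range (Phi N))
      + Module.finrank ℝ ↥(LinearMap.ker (Phi N))
      = Module.finrank ℝ (↥N.complexes → ℝ) :=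
    LinearMap.finrank_range_add_finrank_ker (Phi N)
  have hrange : Module.finrank ℝ ↥(LinearMap.range (Phi N))
      = Fintype.card ↥N.linkageClasses := by
    rw [LinearMap.range_eq_top.mpr (Phi_surj N), finrank_top,
      Module.finrank_fintype_fun_eq_card]
  have hdom : Module.finrank ℝ (↥N.complexes → ℝ) = N.complexes.card := by
    rw [Module.finrank_fintype_fun_eq_card, Fintype.card_coe]
  have hDle : Module.finrank ℝ ↥D ≤ Module.finrank ℝ ↥(LinearMap.ker (Phi N)) :=
    Submodule.finrank_mono (D_le_ker N)
  -- rank–nullity for mapY restricted to D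
  set g : ↥D →ₗ[ℝ] (S → ℝ) := N.mapY ∘ₗ D.subtype with hg
  have hgrange : LinearMap.range g = N.stoichSubspace := by
    rw [hg, LinearMap.range_comp, Submodule.range_subtype, hD, Submodule.map_span]
    congr 1
    ext v
    constructor
    · rintro ⟨u, ⟨r, rfl⟩, rfl⟩
      exact ⟨r.1, r.2, mapY_gen N r⟩
    · rintro ⟨p, hp, rfl⟩
      exact ⟨gen N ⟨p, hp⟩, ⟨⟨p, hp⟩, rfl⟩, mapY_gen N ⟨p, hp⟩⟩
  have hgker : Module.finrank ℝ ↥(LinearMap.ker g) = Module.finrank ℝ ↥V := by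
    have h1 : LinearMap.ker g = Submodule.comap D.subtype V := by
      rw [hg, LinearMap.ker_comp, hV]
      ext u
      simp only [Submodule.mem_comap, Submodule.mem_inf]
      exact ⟨fun h => ⟨u.2, h⟩, fun h => h.2⟩
    rw [h1]
    exact LinearEquiv.finrank_eq (Submodule.comapSubtypeEquivOfLe inf_le_left)
  have hrn2 : Module.finrank ℝ ↥(LinearMap.range g)
      + Module.finrank ℝ ↥(LinearMap.ker g) = Module.finrank ℝ ↥D :=
    LinearMap.finrank_range_add_finrank_ker g
  rw [hgrange, hgker] at hrn2
  -- translate the deficiency hypothesis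
  have hnum : N.numLinkageClasses = Fintype.card ↥N.linkageClasses := by
    rw [CRN.numLinkageClasses, Nat.card_eq_fintype_card]
  rw [CRN.deficiency, hnum, CRN.rank] at hδ
  have hfin : (N.complexes.card : ℤ)
      = 1 + Fintype.card ↥N.linkageClasses + Module.finrank ℝ ↥N.stoichSubspace := by
    linarith
  have hineq : Module.finrank ℝ ↥N.stoichSubspace + Module.finrank ℝ ↥V
      + Fintype.card ↥N.linkageClasses ≤ N.complexes.card := by
    omega
  omega

noncomputable def psi (T : (S → ℝ) → (S → ℝ)) (c : S → ℝ) : ↥N.complexes → ℝ :=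
  fun q => ∏ i, (c i) ^ (T (↑q) i)

lemma psi_pos (T : (S → ℝ) → (S → ℝ)) {c : S → ℝ} (hc : ∀ i, 0 < c i) (q : ↥N.complexes) :
    0 < psi N T c q :=
  Finset.prod_pos fun i _ => Real.rpow_pos_of_pos (hc i) _

noncomputable def wvec (k : ↥N.reactions → ℝ) (T : (S → ℝ) → (S → ℝ)) (c : S → ℝ) :
    ↥N.complexes → ℝ :=
  ∑ r : ↥N.reactions, (k r * psi N T c (srcι N r)) • gen N r

lemma wvec_mem {k : ↥N.reactions → ℝ} {T : (S → ℝ) → (S → ℝ)} {c : S → ℝ}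
    (h : N.IsPosEquilibrium k T c) :
    wvec N k T c ∈ Submodule.span ℝ (Set.range (gen N)) ⊓ LinearMap.ker N.mapY := by
  refine Submodule.mem_inf.mpr ⟨?_, ?_⟩
  · exact Submodule.sum_mem _ fun r _ =>
      Submodule.smul_mem _ _ (Submodule.subset_span ⟨r, rfl⟩)
  · rw [LinearMap.mem_ker, wvec, map_sum]
    simp_rw [map_smul, mapY_gen]
    exact h.2

lemma log_psi (T : (S → ℝ) → (S → ℝ)) {c : S → ℝ} (hc : ∀ i, 0 < c i) (q : ↥N.complexes) :
    Real.log (psi N T c q) = ∑ i, T (↑q) i * Real.log (c i) := by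
  rw [psi, Real.log_prod]
  · exact Finset.sum_congr rfl fun i _ => Real.log_rpow (hc i) _
  · intro i _
    exact (Real.rpow_pos_of_pos (hc i) _).ne'

end CRNAux

/-- For a deficiency-one CRN with PL-RDK kinetics (rate constants `k`, T-matrix `T`)
admitting a positive equilibrium `cstar`: if `y, y'` are nonterminal complexes,
then every positive equilibrium `cstar2` satisfies
`(T_{·,y} − T_{·,y'}) · log (cstar2 / cstar) = 0`. -/
theorem nonterminal_log_relation {S : Type*} [Fintype S] (N : CRN S)
    (hδ : N.deficiency = 1)
    (k : ↥N.reactions → ℝ) (hk : ∀ r, 0 < k r)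
    (T : (S → ℝ) → (S → ℝ))
    (cstar : S → ℝ) (hstar : N.IsPosEquilibrium k T cstar)
    (y y' : S → ℝ) (hy : N.Nonterminal y) (hy' : N.Nonterminal y') :
    ∀ cstar2 : S → ℝ, N.IsPosEquilibrium k T cstar2 →
      ∑ i, (T y i - T y' i) * Real.log (cstar2 i / cstar i) = 0 := by
  classical
  intro c2 h2
  open CRNAux in
  -- setup
  set V := Submodule.span ℝ (Set.range (gen N)) ⊓ LinearMap.ker N.mapY with hV
  have hw1 : wvec N k T cstar ∈ V := wvec_mem N hstar
  have hw2 : wvec N k T c2 ∈ V := wvec_mem N h2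
  have hfr : Module.finrank ℝ ↥V ≤ 1 := finrank_V_le_one N hδ
  -- two vectors in V are dependent
  obtain ⟨a, b, hab, hne⟩ :
      ∃ a b : ℝ, a • wvec N k T cstar + b • wvec N k T c2 = 0 ∧ ¬(a = 0 ∧ b = 0) := by
    have hnli : ¬ LinearIndependent ℝ
        ![(⟨wvec N k T cstar, hw1⟩ : ↥V), (⟨wvec N k T c2, hw2⟩ : ↥V)] := by
      intro hli
      have := hli.fintype_card_le_finrank
      simp at this
      omega
    rw [LinearIndependent.pair_iff] at hnli
    push_neg at hnli
    obtain ⟨a, b, h1, h2'⟩ := hnli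
    refine ⟨a, b, ?_, fun hc => h2' hc.1 hc.2⟩
    have := congrArg (Subtype.val) h1
    simpa using this
  -- the combination lies in the kernel of the Laplacian
  set x : ↥N.complexes → ℝ := fun q => a * psi N T cstar q + b * psi N T c2 q with hx
  have hker : ∑ r : ↥N.reactions, (k r * x (srcι N r)) • gen N r = 0 := by
    rw [← hab, wvec, wvec, Finset.smul_sum, Finset.smul_sum, ← Finset.sum_add_distrib]
    apply Finset.sum_congr rfl
    intro r _
    rw [smul_smul, smul_smul, ← add_smul]
    congr 1
    rw [hx]
    ring
  -- nonterminal complexes as subtype elements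
  set qy : ↥N.complexes := ⟨y, hy.1⟩ with hqy
  set qy' : ↥N.complexes := ⟨y', hy'.1⟩ with hqy'
  have hxy : x qy = 0 := ker_support N k hk x hker qy hy.2
  have hxy' : x qy' = 0 := ker_support N k hk x hker qy' hy'.2
  have hp1 := psi_pos N T hstar.1
  have hp2 := psi_pos N T h2.1
  -- both coefficients are nonzero
  have ha : a ≠ 0 := by
    intro h0
    rw [hx] at hxy
    simp only [h0, zero_mul, zero_add] at hxy
    have hb : b ≠ 0 := fun h0' => hne ⟨h0, h0'⟩
    exact (mul_ne_zero hb (hp2 qy).ne') hxy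
  have hb : b ≠ 0 := by
    intro h0
    rw [hx] at hxy
    simp only [h0, zero_mul, add_zero] at hxy
    exact (mul_ne_zero ha (hp1 qy).ne') hxy
  -- cross ratio identity
  have hcross : psi N T c2 qy * psi N T cstar qy' = psi N T c2 qy' * psi N T cstar qy := by
    have e1 : a * psi N T cstar qy + b * psi N T c2 qy = 0 := hxy
    have e2 : a * psi N T cstar qy' + b * psi N T c2 qy' = 0 := hxy'
    have h3 : b * (psi N T c2 qy * psi N T cstar qy')
        = b * (psi N T c2 qy' * psi N T cstar qy) := by
      linear_combination (psi N T cstar qy') * e1 - (psi N T cstar qy) * e2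
    exact mul_left_cancel₀ hb h3
  -- take logarithms
  have hlog : Real.log (psi N T c2 qy) + Real.log (psi N T cstar qy')
      = Real.log (psi N T c2 qy') + Real.log (psi N T cstar qy) := by
    rw [← Real.log_mul (hp2 qy).ne' (hp1 qy').ne',
      ← Real.log_mul (hp2 qy').ne' (hp1 qy).ne', hcross]
  rw [log_psi N T h2.1, log_psi N T hstar.1, log_psi N T h2.1, log_psi N T hstar.1] at hlog
  have hsimp : ∀ i, (T y i - T y' i) * Real.log (c2 i / cstar i)
      = (T y i * Real.log (c2 i) - T y i * Real.log (cstar i))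
        - (T y' i * Real.log (c2 i) - T y' i * Real.log (cstar i)) := by
    intro i
    rw [Real.log_div (h2.1 i).ne' (hstar.1 i).ne']
    ring
  simp_rw [hsimp]
  simp only [Finset.sum_sub_distrib]
  have hyv : (↑qy : S → ℝ) = y := rfl
  have hyv' : (↑qy' : S → ℝ) = y' := rfl
  rw [hyv, hyv'] at hlog
  linarith
end

section
/- Shinar–Feinberg-type theorem for PL-RDK systems: Let N = (S, C, R) be a deficiency-one chemical reaction network and suppose (N, K) is a power law kinetic system with reactant-determined interactions (PL-RDK) with T-matrix T that admits a positive equilibrium. If y, y' ∈ C are nonterminal complexes whose kinetic order vectors differ only in species X_i (i.e., T_{·,y} − T_{·,y'} = a·e_i for some nonzero real a, where e_i is the standard basis vector of species X_i), then the system has absolute concentration robustness in X_i: for any two positive equilibria c*, c** ∈ ℝ^S_{>0} of the system, c*_i = c**_i. -/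
open scoped BigOperators Classical

namespace CRN
section Graph

variable {S : Type*} [Fintype S] (N : CRN S)

lemma reach_mem {y z : S → ℝ} (hy : y ∈ N.complexes) (h : N.reach y z) :
    z ∈ N.complexes := by
  induction h with
  | refl => exact hy
  | tail _ e ih => exact N.mem_target _ e

lemma terminal_step {t c : S → ℝ} (ht : N.IsTerminal t) (e : N.step t c) :
    N.IsTerminal c := by
  refine ⟨N.mem_target _ e, fun z hz => ?_⟩
  have h1 : N.reach t z := Relation.ReflTransGen.head e hz
  have h2 : N.reach z t := ht.2 z h1
  exact h2.trans (Relation.ReflTransGen.single e)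

lemma exists_terminal_aux : ∀ n (y : S → ℝ), y ∈ N.complexes →
    (N.complexes.filter (fun z => N.reach y z)).card ≤ n →
    ∃ t, N.IsTerminal t ∧ N.reach y t := by
  intro n
  induction n with
  | zero =>
    intro y hy hcard
    exfalso
    have : y ∈ N.complexes.filter (fun z => N.reach y z) := by
      exact Finset.mem_filter.mpr ⟨hy, Relation.ReflTransGen.refl⟩
    have := Finset.card_pos.mpr ⟨y, this⟩
    omega
  | succ n ih =>
    intro y hy hcard
    by_cases ht : N.IsTerminal y
    · exact ⟨y, ht, Relation.ReflTransGen.refl⟩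
    · have : ∃ y₁, N.reach y y₁ ∧ ¬ N.reach y₁ y := by
        by_contra h
        push_neg at h
        exact ht ⟨hy, h⟩
      obtain ⟨y₁, hr, hnr⟩ := this
      have hy₁ : y₁ ∈ N.complexes := N.reach_mem hy hr
      have hsub : N.complexes.filter (fun z => N.reach y₁ z) ⊂
          N.complexes.filter (fun z => N.reach y z) := by
        constructor
        · intro z hz
          rw [Finset.mem_filter] at hz ⊢
          exact ⟨hz.1, hr.trans hz.2⟩
        · intro hsub'
          have : y ∈ N.complexes.filter (fun z => N.reach y₁ z) := by
            apply hsub'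
            exact Finset.mem_filter.mpr ⟨hy, Relation.ReflTransGen.refl⟩
          rw [Finset.mem_filter] at this
          exact hnr this.2
      have hcard' : (N.complexes.filter (fun z => N.reach y₁ z)).card ≤ n := by
        have := Finset.card_lt_card hsub
        omega
      obtain ⟨t, htt, htr⟩ := ih y₁ hy₁ hcard'
      exact ⟨t, htt, hr.trans htr⟩

lemma exists_terminal {y : S → ℝ} (hy : y ∈ N.complexes) :
    ∃ t, N.IsTerminal t ∧ N.reach y t :=
  N.exists_terminal_aux _ y hy le_rfl

end Graph
end CRN
namespace CRN
section Lap

variable {S : Type*} [Fintype S] (N : CRN S)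

/-- Source of a reaction as an element of the complex set. -/
def src (r : ↥N.reactions) : ↥N.complexes := ⟨r.1.1, N.mem_source r.1 r.2⟩

/-- Target of a reaction as an element of the complex set. -/
def tgt (r : ↥N.reactions) : ↥N.complexes := ⟨r.1.2, N.mem_target r.1 r.2⟩

lemma laplacian_apply (k : ↥N.reactions → ℝ) (w : ↥N.complexes → ℝ) :
    N.laplacian k w = ∑ r : ↥N.reactions,
      (k r * w (N.src r)) • (Pi.single (N.tgt r) (1:ℝ) - Pi.single (N.src r) 1) := by
  simp only [laplacian, LinearMap.sum_apply, LinearMap.smul_apply,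
    LinearMap.smulRight_apply, LinearMap.proj_apply, src, tgt, smul_smul]

lemma laplacian_coord (k : ↥N.reactions → ℝ) (w : ↥N.complexes → ℝ) (z : ↥N.complexes) :
    N.laplacian k w z = (∑ r : ↥N.reactions, k r * w (N.src r) * (if z = N.tgt r then (1:ℝ) else 0))
      - ∑ r : ↥N.reactions, k r * w (N.src r) * (if z = N.src r then (1:ℝ) else 0) := by
  classical
  rw [laplacian_apply]
  rw [Finset.sum_apply z Finset.univ _, ← Finset.sum_sub_distrib]
  apply Finset.sum_congr rfl
  intro r _
  simp [Pi.single_apply, mul_sub, mul_ite]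

end Lap
end CRN
namespace CRN
section Kernel

variable {S : Type*} [Fintype S] (N : CRN S)

lemma ker_laplacian_eq_zero (k : ↥N.reactions → ℝ) (hk : ∀ r, 0 < k r)
    (w : ↥N.complexes → ℝ) (hw : N.laplacian k w = 0)
    (c : ↥N.complexes) (hc : ¬ N.IsTerminal (c : S → ℝ)) : w c = 0 := by
  classical
  set NT : Finset ↥N.complexes :=
    Finset.univ.filter (fun z => ¬ N.IsTerminal (z : S → ℝ)) with hNT
  have memNT : ∀ z : ↥N.complexes, z ∈ NT ↔ ¬ N.IsTerminal (z : S → ℝ) := by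
    intro z; simp [hNT]
  have hcNT : c ∈ NT := (memNT c).mpr hc
  have hsrcNT : ∀ r : ↥N.reactions, N.tgt r ∈ NT → N.src r ∈ NT := by
    intro r hr
    rw [memNT] at hr ⊢
    intro hterm
    have hstep : N.step (N.src r : S → ℝ) (N.tgt r : S → ℝ) := by
      simpa [CRN.step, src, tgt] using r.2
    exact hr (N.terminal_step hterm hstep)
  -- the balance equation at each complex
  have hEq : ∀ z : ↥N.complexes,
      (∑ r : ↥N.reactions, k r * w (N.src r) * (if z = N.tgt r then (1:ℝ) else 0))
        = ∑ r : ↥N.reactions, k r * w (N.src r) * (if z = N.src r then (1:ℝ) else 0) := by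
    intro z
    have h0 : N.laplacian k w z = 0 := by rw [hw]; rfl
    rw [laplacian_coord] at h0
    linarith
  -- outflow rewriting
  have hOut : ∀ (v : ↥N.complexes → ℝ) (z : ↥N.complexes),
      (∑ r : ↥N.reactions, k r * v (N.src r) * (if z = N.src r then (1:ℝ) else 0))
        = (∑ r : ↥N.reactions, k r * (if z = N.src r then (1:ℝ) else 0)) * v z := by
    intro v z
    rw [Finset.sum_mul]
    apply Finset.sum_congr rfl
    intro r _
    by_cases hzr : z = N.src r
    · rw [← hzr]; ring
    · simp [hzr]
  set d : ↥N.complexes → ℝ :=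
    fun z => ∑ r : ↥N.reactions, k r * (if z = N.src r then (1:ℝ) else 0) with hd
  have hd0 : ∀ z, 0 ≤ d z := by
    intro z
    apply Finset.sum_nonneg
    intro r _
    exact mul_nonneg (hk r).le (by split <;> norm_num)
  -- pointwise: d z * |w z| ≤ absolute inflow
  have hA1 : ∀ z : ↥N.complexes, d z * |w z| ≤
      ∑ r : ↥N.reactions, k r * |w (N.src r)| * (if z = N.tgt r then (1:ℝ) else 0) := by
    intro z
    have h1 : d z * |w z| = |(∑ r : ↥N.reactions, k r * (if z = N.src r then (1:ℝ) else 0)) * w z| := by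
      rw [abs_mul, abs_of_nonneg (hd0 z)]
    rw [h1, ← hOut w z, ← hEq z]
    refine (Finset.abs_sum_le_sum_abs _ _).trans_eq ?_
    apply Finset.sum_congr rfl
    intro r _
    rw [abs_mul, abs_mul, abs_of_pos (hk r)]
    congr 1
    split <;> simp
  -- sum over NT of absolute inflow ≤ sum of d * |w|
  have hA2 : (∑ z ∈ NT, ∑ r : ↥N.reactions, k r * |w (N.src r)| * (if z = N.tgt r then (1:ℝ) else 0))
      ≤ ∑ z ∈ NT, d z * |w z| := by
    have hL : (∑ z ∈ NT, ∑ r : ↥N.reactions, k r * |w (N.src r)| * (if z = N.tgt r then (1:ℝ) else 0))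
        = ∑ r : ↥N.reactions, k r * |w (N.src r)| * (if N.tgt r ∈ NT then (1:ℝ) else 0) := by
      rw [Finset.sum_comm]
      apply Finset.sum_congr rfl
      intro r _
      rw [← Finset.mul_sum, Finset.sum_ite_eq' NT (N.tgt r) (fun _ => (1:ℝ))]
    have hR : (∑ z ∈ NT, d z * |w z|)
        = ∑ r : ↥N.reactions, k r * |w (N.src r)| * (if N.src r ∈ NT then (1:ℝ) else 0) := by
      have : ∀ z ∈ NT, d z * |w z|
          = ∑ r : ↥N.reactions, k r * |w (N.src r)| * (if z = N.src r then (1:ℝ) else 0) := by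
        intro z _
        rw [hOut (fun z => |w z|) z]
      rw [Finset.sum_congr rfl this, Finset.sum_comm]
      apply Finset.sum_congr rfl
      intro r _
      rw [← Finset.mul_sum, Finset.sum_ite_eq' NT (N.src r) (fun _ => (1:ℝ))]
    rw [hL, hR]
    apply Finset.sum_le_sum
    intro r _
    by_cases h : N.tgt r ∈ NT
    · simp [h, hsrcNT r h]
    · have : k r * |w (N.src r)| * (if N.tgt r ∈ NT then (1:ℝ) else 0) = 0 := by simp [h]
      rw [this]
      exact mul_nonneg (mul_nonneg (hk r).le (abs_nonneg _)) (by split <;> norm_num)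
  -- equality of the sums
  have hsums : (∑ z ∈ NT, d z * |w z|)
      = ∑ z ∈ NT, ∑ r : ↥N.reactions, k r * |w (N.src r)| * (if z = N.tgt r then (1:ℝ) else 0) := by
    have h1 := Finset.sum_le_sum (fun z (_ : z ∈ NT) => hA1 z)
    exact le_antisymm h1 hA2
  -- pointwise equality (★)
  have hstar : ∀ z ∈ NT, d z * |w z|
      = ∑ r : ↥N.reactions, k r * |w (N.src r)| * (if z = N.tgt r then (1:ℝ) else 0) :=
    (Finset.sum_eq_sum_iff_of_le (fun z _ => hA1 z)).mp hsums
  -- leak condition (†)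
  have hdag : ∀ r : ↥N.reactions, N.src r ∈ NT → N.tgt r ∉ NT → w (N.src r) = 0 := by
    -- equality in hA2's middle step
    have hL : (∑ z ∈ NT, ∑ r : ↥N.reactions, k r * |w (N.src r)| * (if z = N.tgt r then (1:ℝ) else 0))
        = ∑ r : ↥N.reactions, k r * |w (N.src r)| * (if N.tgt r ∈ NT then (1:ℝ) else 0) := by
      rw [Finset.sum_comm]
      apply Finset.sum_congr rfl
      intro r _
      rw [← Finset.mul_sum, Finset.sum_ite_eq' NT (N.tgt r) (fun _ => (1:ℝ))]
    have hR : (∑ z ∈ NT, d z * |w z|)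
        = ∑ r : ↥N.reactions, k r * |w (N.src r)| * (if N.src r ∈ NT then (1:ℝ) else 0) := by
      have : ∀ z ∈ NT, d z * |w z|
          = ∑ r : ↥N.reactions, k r * |w (N.src r)| * (if z = N.src r then (1:ℝ) else 0) := by
        intro z _
        rw [hOut (fun z => |w z|) z]
      rw [Finset.sum_congr rfl this, Finset.sum_comm]
      apply Finset.sum_congr rfl
      intro r _
      rw [← Finset.mul_sum, Finset.sum_ite_eq' NT (N.src r) (fun _ => (1:ℝ))]
    have heq2 : (∑ r : ↥N.reactions, k r * |w (N.src r)| * (if N.tgt r ∈ NT then (1:ℝ) else 0))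
        = ∑ r : ↥N.reactions, k r * |w (N.src r)| * (if N.src r ∈ NT then (1:ℝ) else 0) := by
      rw [← hL, ← hR, hsums]
    have hle : ∀ r : ↥N.reactions, r ∈ Finset.univ →
        k r * |w (N.src r)| * (if N.tgt r ∈ NT then (1:ℝ) else 0)
          ≤ k r * |w (N.src r)| * (if N.src r ∈ NT then (1:ℝ) else 0) := by
      intro r _
      by_cases h : N.tgt r ∈ NT
      · simp [h, hsrcNT r h]
      · have : k r * |w (N.src r)| * (if N.tgt r ∈ NT then (1:ℝ) else 0) = 0 := by simp [h]
        rw [this]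
        exact mul_nonneg (mul_nonneg (hk r).le (abs_nonneg _)) (by split <;> norm_num)
    have hpw := (Finset.sum_eq_sum_iff_of_le hle).mp heq2
    intro r hrs hrt
    have := hpw r (Finset.mem_univ r)
    rw [if_pos hrs, if_neg hrt, mul_zero, mul_one] at this
    have hkr := hk r
    have : |w (N.src r)| = 0 := by
      by_contra habs
      have : 0 < k r * |w (N.src r)| := mul_pos hkr (lt_of_le_of_ne (abs_nonneg _) (Ne.symm habs))
      linarith
    exact abs_eq_zero.mp this
  -- forward-closure path argument
  by_contra hwc
  have claim : ∀ z, N.reach (c : S → ℝ) z →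
      ∃ hz : z ∈ N.complexes, ¬ N.IsTerminal z ∧ w ⟨z, hz⟩ ≠ 0 := by
    intro z hz
    induction hz with
    | refl => exact ⟨c.2, hc, by simpa using hwc⟩
    | @tail b z hreach e ih =>
      obtain ⟨hb, hbterm, hbw⟩ := ih
      set r₀ : ↥N.reactions := ⟨(b, z), e⟩ with hr₀
      have hsrc0 : N.src r₀ = ⟨b, hb⟩ := by
        apply Subtype.ext; rfl
      have hsrcmem : N.src r₀ ∈ NT := by
        rw [hsrc0, memNT]; exact hbterm
      have htgtmem : N.tgt r₀ ∈ NT := by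
        by_contra h
        exact hbw (by rw [← hsrc0]; exact hdag r₀ hsrcmem h)
      have hzmem : z ∈ N.complexes := (N.tgt r₀).2
      have hzterm : ¬ N.IsTerminal z := (memNT (N.tgt r₀)).mp htgtmem
      refine ⟨hzmem, hzterm, ?_⟩
      have hpos : 0 < d (N.tgt r₀) * |w (N.tgt r₀)| := by
        rw [hstar (N.tgt r₀) htgtmem]
        have hterm0 : 0 < k r₀ * |w (N.src r₀)| * (if N.tgt r₀ = N.tgt r₀ then (1:ℝ) else 0) := by
          rw [if_pos rfl, mul_one, hsrc0]
          exact mul_pos (hk r₀) (abs_pos.mpr hbw)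
        refine lt_of_lt_of_le hterm0 ?_
        apply Finset.single_le_sum (f := fun r : ↥N.reactions =>
          k r * |w (N.src r)| * (if N.tgt r₀ = N.tgt r then (1:ℝ) else 0)) ?_ (Finset.mem_univ r₀)
        intro r _
        exact mul_nonneg (mul_nonneg (hk r).le (abs_nonneg _)) (by split <;> norm_num)
      intro habs
      have : w (N.tgt r₀) = 0 := by
        have : (N.tgt r₀ : S → ℝ) = z := rfl
        have hcoe : N.tgt r₀ = (⟨z, hzmem⟩ : ↥N.complexes) := Subtype.ext rfl
        rw [hcoe]; exact habs
      rw [this, abs_zero, mul_zero] at hpos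
      exact lt_irrefl _ hpos
  obtain ⟨t, htt, htr⟩ := N.exists_terminal c.2
  obtain ⟨_, hnt, _⟩ := claim t htr
  exact hnt htt

end Kernel
end CRN
namespace CRN
section Dim

variable {S : Type*} [Fintype S] (N : CRN S)

lemma linked_symm : Symmetric N.linked :=
  fun a b h => (@Relation.ReflTransGen.stdSymm _
    (fun a b => (a, b) ∈ N.reactions ∨ (b, a) ∈ N.reactions) ⟨fun _ _ h => h.symm⟩).symm a b h

/-- The linkage class of a complex. -/
def cls (y : S → ℝ) : Set (S → ℝ) := {y' | y' ∈ N.complexes ∧ N.linked y y'}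

lemma cls_mem_linkageClasses {y : S → ℝ} (hy : y ∈ N.complexes) :
    N.cls y ∈ N.linkageClasses := ⟨y, hy, rfl⟩

lemma mem_cls_self {y : S → ℝ} (hy : y ∈ N.complexes) : y ∈ N.cls y :=
  ⟨hy, Relation.ReflTransGen.refl⟩

lemma cls_eq_of_mem {y z : S → ℝ} (hz : z ∈ N.cls y) : N.cls z = N.cls y := by
  ext u
  constructor
  · rintro ⟨hu, hl⟩
    exact ⟨hu, hz.2.trans hl⟩
  · rintro ⟨hu, hl⟩
    exact ⟨hu, (N.linked_symm hz.2).trans hl⟩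

lemma linkageClass_eq_cls {L : Set (S → ℝ)} (hL : L ∈ N.linkageClasses)
    {z : S → ℝ} (hz : z ∈ L) : L = N.cls z := by
  obtain ⟨y, hy, rfl⟩ := hL
  exact (N.cls_eq_of_mem hz).symm

lemma cls_step_iff {y : S → ℝ} (r : ↥N.reactions) :
    (N.src r : S → ℝ) ∈ N.cls y ↔ (N.tgt r : S → ℝ) ∈ N.cls y := by
  have hedge : N.linked (N.src r : S → ℝ) (N.tgt r : S → ℝ) := by
    apply Relation.ReflTransGen.single
    left
    simpa [src, tgt] using r.2
  constructor
  · rintro ⟨_, hl⟩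
    exact ⟨(N.tgt r).2, hl.trans hedge⟩
  · rintro ⟨_, hl⟩
    exact ⟨(N.src r).2, hl.trans (N.linked_symm hedge)⟩

noncomputable instance : Fintype ↥N.linkageClasses := by
  have : Finite ↥N.linkageClasses := by
    have hsurj : Function.Surjective
        (fun c : ↥N.complexes => (⟨N.cls (c : S → ℝ),
          N.cls_mem_linkageClasses c.2⟩ : ↥N.linkageClasses)) := by
      rintro ⟨L, hL⟩
      obtain ⟨y, hy, rfl⟩ := hL
      exact ⟨⟨y, hy⟩, rfl⟩
    exact Finite.of_surjective _ hsurj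
  exact Fintype.ofFinite _

/-- The class-summing linear map. -/
noncomputable def phi : (↥N.complexes → ℝ) →ₗ[ℝ] (↥N.linkageClasses → ℝ) where
  toFun x := fun L => ∑ c : ↥N.complexes, if (c : S → ℝ) ∈ (L : Set (S → ℝ)) then x c else 0
  map_add' x y := by
    funext L
    rw [Pi.add_apply, ← Finset.sum_add_distrib]
    exact Finset.sum_congr rfl (fun c _ => by split <;> simp)
  map_smul' a x := by
    funext L
    rw [RingHom.id_apply, Pi.smul_apply, Finset.smul_sum]
    exact Finset.sum_congr rfl (fun c _ => by split <;> simp)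

lemma phi_apply (x : ↥N.complexes → ℝ) (L : ↥N.linkageClasses) :
    N.phi x L = ∑ c : ↥N.complexes, if (c : S → ℝ) ∈ (L : Set (S → ℝ)) then x c else 0 := rfl

lemma phi_single (c₀ : ↥N.complexes) (L : ↥N.linkageClasses) :
    N.phi (Pi.single c₀ 1) L = if (c₀ : S → ℝ) ∈ (L : Set (S → ℝ)) then 1 else 0 := by
  classical
  rw [phi_apply]
  rw [Finset.sum_eq_single c₀ (fun b _ hb => by simp [Pi.single_apply, hb])
    (fun h => absurd (Finset.mem_univ _) h)]
  simp

lemma phi_surjective : Function.Surjective N.phi := by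
  classical
  have hrange : ∀ L : ↥N.linkageClasses, (Pi.single L (1:ℝ) : ↥N.linkageClasses → ℝ) ∈ LinearMap.range N.phi := by
    intro L
    obtain ⟨y₀, hy₀, hLy⟩ := L.2
    refine ⟨Pi.single ⟨y₀, hy₀⟩ 1, ?_⟩
    funext L'
    rw [phi_single]
    have : y₀ ∈ (L' : Set (S → ℝ)) ↔ L' = L := by
      constructor
      · intro hmem
        apply Subtype.ext
        exact (N.linkageClass_eq_cls L'.2 hmem).trans hLy.symm
      · intro h
        subst h
        rw [hLy]
        exact N.mem_cls_self hy₀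
    rw [Pi.single_apply]
    by_cases h : y₀ ∈ (L' : Set (S → ℝ))
    · rw [if_pos h, if_pos (this.mp h)]
    · rw [if_neg h, if_neg (fun he => h (this.mpr he))]
  intro t
  have : t ∈ LinearMap.range N.phi := by
    rw [pi_eq_sum_univ t]
    refine Submodule.sum_mem _ (fun L _ => Submodule.smul_mem _ _ ?_)
    rw [show (fun j => if L = j then (1:ℝ) else 0)
        = (Pi.single L 1 : ↥N.linkageClasses → ℝ) from funext fun j => by
      simp [Pi.single_apply, eq_comm]]
    exact hrange L
  exact this.imp (fun _ h => h)

lemma incidence_apply (x : ↥N.reactions → ℝ) :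
    N.incidence x = ∑ r : ↥N.reactions,
      x r • (Pi.single (N.tgt r) (1:ℝ) - Pi.single (N.src r) 1) := by
  simp only [incidence, LinearMap.sum_apply, LinearMap.smulRight_apply,
    LinearMap.proj_apply, src, tgt]

lemma range_incidence_le_ker_phi : LinearMap.range N.incidence ≤ LinearMap.ker N.phi := by
  rintro _ ⟨x, rfl⟩
  rw [LinearMap.mem_ker, incidence_apply, map_sum]
  funext L
  rw [Finset.sum_apply]
  rw [Pi.zero_apply]
  apply Finset.sum_eq_zero
  intro r _
  rw [map_smul, map_sub, Pi.smul_apply, Pi.sub_apply, phi_single, phi_single]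
  obtain ⟨y₀, hy₀, hLy⟩ := L.2
  have : ((N.tgt r : S → ℝ) ∈ (L : Set (S → ℝ))) ↔ ((N.src r : S → ℝ) ∈ (L : Set (S → ℝ))) := by
    have h1 : (L : Set (S → ℝ)) = N.cls y₀ := hLy
    rw [h1]
    exact (N.cls_step_iff r).symm
  by_cases h : (N.tgt r : S → ℝ) ∈ (L : Set (S → ℝ))
  · rw [if_pos h, if_pos (this.mp h)]; simp
  · rw [if_neg h, if_neg (fun he => h (this.mpr he))]; simp

end Dim
end CRN
namespace CRN
section Rank

variable {S : Type*} [Fintype S] (N : CRN S)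

lemma mapY_apply (x : ↥N.complexes → ℝ) :
    N.mapY x = ∑ c : ↥N.complexes, x c • (c : S → ℝ) := by
  simp only [mapY, LinearMap.sum_apply, LinearMap.smulRight_apply, LinearMap.proj_apply]

lemma mapY_single (z : ↥N.complexes) (a : ℝ) :
    N.mapY (Pi.single z a) = a • (z : S → ℝ) := by
  classical
  rw [mapY_apply]
  rw [Finset.sum_eq_single z (fun b _ hb => by simp [Pi.single_apply, hb])
    (fun h => absurd (Finset.mem_univ _) h)]
  simp

lemma mapY_incidence (x : ↥N.reactions → ℝ) :
    N.mapY (N.incidence x) = ∑ r : ↥N.reactions,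
      x r • ((N.tgt r : S → ℝ) - (N.src r : S → ℝ)) := by
  rw [incidence_apply, map_sum]
  apply Finset.sum_congr rfl
  intro r _
  rw [map_smul, map_sub, mapY_single, mapY_single, one_smul, one_smul]

lemma map_range_incidence :
    Submodule.map N.mapY (LinearMap.range N.incidence) = N.stoichSubspace := by
  apply le_antisymm
  · rintro _ ⟨_, ⟨x, rfl⟩, rfl⟩
    rw [mapY_incidence]
    apply Submodule.sum_mem
    intro r _
    apply Submodule.smul_mem
    apply Submodule.subset_span
    exact ⟨r.1, r.2, rfl⟩
  · rw [stoichSubspace, Submodule.span_le]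
    rintro v ⟨p, hp, rfl⟩
    set r₀ : ↥N.reactions := ⟨p, hp⟩ with hr₀
    refine ⟨N.incidence (Pi.single r₀ 1), ⟨Pi.single r₀ 1, rfl⟩, ?_⟩
    rw [mapY_incidence]
    classical
    rw [Finset.sum_eq_single r₀ (fun b _ hb => by simp [Pi.single_apply, hb])
      (fun h => absurd (Finset.mem_univ _) h)]
    simp [src, tgt]
    rfl

lemma finrank_inf_le_one (hδ : N.deficiency = 1) :
    Module.finrank ℝ ↥(LinearMap.ker N.mapY ⊓ LinearMap.range N.incidence) ≤ 1 := by
  classical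
  set V := LinearMap.range N.incidence with hV
  have hrn : Module.finrank ℝ ↥(Submodule.map N.mapY V)
      + Module.finrank ℝ ↥(LinearMap.ker (N.mapY.domRestrict V))
      = Module.finrank ℝ ↥V := by
    have := LinearMap.finrank_range_add_finrank_ker (N.mapY.domRestrict V)
    rwa [LinearMap.range_domRestrict] at this
  have hker_eq : LinearMap.ker (N.mapY.domRestrict V)
      = Submodule.comap V.subtype (LinearMap.ker N.mapY ⊓ V) := by
    rw [LinearMap.ker_domRestrict]
    ext x
    simp [Submodule.mem_comap, x.2]
  have hker_rank : Module.finrank ℝ ↥(LinearMap.ker (N.mapY.domRestrict V))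
      = Module.finrank ℝ ↥(LinearMap.ker N.mapY ⊓ V) := by
    rw [hker_eq]
    exact (Submodule.comapSubtypeEquivOfLe inf_le_right).finrank_eq
  have hmapV : Module.finrank ℝ ↥(Submodule.map N.mapY V) = N.rank := by
    rw [hV, map_range_incidence]; rfl
  -- finrank V ≤ finrank (ker phi)
  have hVle : Module.finrank ℝ ↥V ≤ Module.finrank ℝ ↥(LinearMap.ker N.phi) :=
    Submodule.finrank_mono (N.range_incidence_le_ker_phi)
  have hphi : Module.finrank ℝ ↥(LinearMap.ker N.phi) + N.numLinkageClasses
      = N.complexes.card := by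
    have h1 := LinearMap.finrank_range_add_finrank_ker N.phi
    have h2 : LinearMap.range N.phi = ⊤ := LinearMap.range_eq_top.mpr N.phi_surjective
    rw [h2] at h1
    have h3 : Module.finrank ℝ ↥(⊤ : Submodule ℝ (↥N.linkageClasses → ℝ))
        = N.numLinkageClasses := by
      rw [finrank_top, Module.finrank_pi, Fintype.card, numLinkageClasses,
        Nat.card_eq_fintype_card]
      rfl
    rw [h3] at h1
    have h4 : Module.finrank ℝ (↥N.complexes → ℝ) = N.complexes.card := by
      rw [Module.finrank_pi, Fintype.card_coe]
    omega
  rw [deficiency] at hδ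
  omega

lemma exists_smul_of_finrank_le_one {M : Type*} [AddCommGroup M] [Module ℝ M]
    [FiniteDimensional ℝ M] {W : Submodule ℝ M}
    (hW : Module.finrank ℝ ↥W ≤ 1) {v u : M} (hv : v ∈ W) (hu : u ∈ W)
    (hvne : v ≠ 0) : ∃ lam : ℝ, u = lam • v := by
  obtain ⟨v₀, hv₀⟩ := finrank_le_one_iff.mp hW
  obtain ⟨b, hb⟩ := hv₀ ⟨u, hu⟩
  obtain ⟨a, ha⟩ := hv₀ ⟨v, hv⟩
  have ha' : a • (v₀ : M) = v := by
    have := congrArg (Subtype.val) ha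
    simpa using this
  have hb' : b • (v₀ : M) = u := by
    have := congrArg (Subtype.val) hb
    simpa using this
  have hane : a ≠ 0 := by
    intro h
    rw [h, zero_smul] at ha'
    exact hvne ha'.symm
  refine ⟨b / a, ?_⟩
  rw [← hb', ← ha', smul_smul]
  congr 1
  field_simp

end Rank
end CRN
/-- **Shinar–Feinberg-type theorem for PL-RDK systems.**
Let `N` be a deficiency-one CRN with PL-RDK kinetics (rate constants `k`,
T-matrix `T`) admitting a positive equilibrium.  If `y, y'` are nonterminal
complexes whose kinetic order vectors differ only in species `i`
(`T_{·,y} − T_{·,y'} = a • e_i`, `a ≠ 0`), then the system has absolute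
concentration robustness in species `i`. -/
theorem shinar_feinberg_PLRDK {S : Type*} [Fintype S] [DecidableEq S] (N : CRN S)
    (hδ : N.deficiency = 1)
    (k : ↥N.reactions → ℝ) (hk : ∀ r, 0 < k r)
    (T : (S → ℝ) → (S → ℝ))
    (hex : ∃ c, N.IsPosEquilibrium k T c)
    (y y' : S → ℝ) (hy : N.Nonterminal y) (hy' : N.Nonterminal y')
    (i : S) (a : ℝ) (ha : a ≠ 0)
    (hT : (fun j => T y j - T y' j) = Pi.single i a) :
    ∀ c c' : S → ℝ, N.IsPosEquilibrium k T c → N.IsPosEquilibrium k T c' →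
      c i = c' i := by
  classical
  intro c c' hcE hc'E
  obtain ⟨hcpos, hceq⟩ := hcE
  obtain ⟨hc'pos, hc'eq⟩ := hc'E
  set Ψ : ↥N.complexes → ℝ := fun z => ∏ j, (c j) ^ (T (z : S → ℝ) j) with hΨdef
  set Ψ' : ↥N.complexes → ℝ := fun z => ∏ j, (c' j) ^ (T (z : S → ℝ) j) with hΨ'def
  have hΨpos : ∀ z, 0 < Ψ z :=
    fun z => Finset.prod_pos (fun j _ => Real.rpow_pos_of_pos (hcpos j) _)
  have hΨ'pos : ∀ z, 0 < Ψ' z :=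
    fun z => Finset.prod_pos (fun j _ => Real.rpow_pos_of_pos (hc'pos j) _)
  -- mapY ∘ laplacian on Ψ is the equilibrium condition
  have hlapY : ∀ (cc : S → ℝ),
      (∑ r : ↥N.reactions, (k r * ∏ j, (cc j) ^ (T r.1.1 j)) • ((r.1.2 : S → ℝ) - r.1.1) = 0) →
      N.mapY (N.laplacian k (fun z : ↥N.complexes => ∏ j, (cc j) ^ (T (z : S → ℝ) j))) = 0 := by
    intro cc heq
    rw [CRN.laplacian_apply, map_sum, ← heq]
    apply Finset.sum_congr rfl
    intro r _
    rw [map_smul, map_sub, CRN.mapY_single, CRN.mapY_single, one_smul, one_smul]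
    rfl
  have hrange : ∀ w : ↥N.complexes → ℝ,
      N.laplacian k w ∈ LinearMap.range N.incidence := by
    intro w
    refine ⟨fun r => k r * w (N.src r), ?_⟩
    rw [CRN.incidence_apply, CRN.laplacian_apply]
  set cy : ↥N.complexes := ⟨y, hy.1⟩ with hcy
  set cy' : ↥N.complexes := ⟨y', hy'.1⟩ with hcy'
  have hAker : N.mapY (N.laplacian k Ψ) = 0 := hlapY c hceq
  have hA'ker : N.mapY (N.laplacian k Ψ') = 0 := hlapY c' hc'eq
  have hAmem : N.laplacian k Ψ ∈ LinearMap.ker N.mapY ⊓ LinearMap.range N.incidence :=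
    Submodule.mem_inf.mpr ⟨LinearMap.mem_ker.mpr hAker, hrange Ψ⟩
  have hA'mem : N.laplacian k Ψ' ∈ LinearMap.ker N.mapY ⊓ LinearMap.range N.incidence :=
    Submodule.mem_inf.mpr ⟨LinearMap.mem_ker.mpr hA'ker, hrange Ψ'⟩
  have hAne : N.laplacian k Ψ ≠ 0 := by
    intro h
    have h0 := N.ker_laplacian_eq_zero k hk Ψ h cy hy.2
    exact (hΨpos cy).ne' h0
  obtain ⟨lam, hlam⟩ := CRN.exists_smul_of_finrank_le_one
    (N.finrank_inf_le_one hδ) hAmem hA'mem hAne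
  have hker0 : N.laplacian k (Ψ' - lam • Ψ) = 0 := by
    rw [map_sub, map_smul, hlam, sub_self]
  have h1 : Ψ' cy = lam * Ψ cy := by
    have := N.ker_laplacian_eq_zero k hk _ hker0 cy hy.2
    simp only [Pi.sub_apply, Pi.smul_apply, smul_eq_mul, sub_eq_zero] at this
    exact this
  have h2 : Ψ' cy' = lam * Ψ cy' := by
    have := N.ker_laplacian_eq_zero k hk _ hker0 cy' hy'.2
    simp only [Pi.sub_apply, Pi.smul_apply, smul_eq_mul, sub_eq_zero] at this
    exact this
  have key : Ψ' cy * Ψ cy' = Ψ' cy' * Ψ cy := by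
    rw [h1, h2]; ring
  -- take logarithms
  have hlog : ∀ (cc : S → ℝ), (∀ j, 0 < cc j) → ∀ yy : S → ℝ,
      Real.log (∏ j, (cc j) ^ (T yy j)) = ∑ j, T yy j * Real.log (cc j) := by
    intro cc hpos yy
    rw [Real.log_prod (fun j _ => (Real.rpow_pos_of_pos (hpos j) _).ne')]
    exact Finset.sum_congr rfl (fun j _ => Real.log_rpow (hpos j) _)
  have hkeylog := congrArg Real.log key
  rw [Real.log_mul (hΨ'pos cy).ne' (hΨpos cy').ne',
      Real.log_mul (hΨ'pos cy').ne' (hΨpos cy).ne'] at hkeylog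
  have hΨc : ∀ z : ↥N.complexes, Real.log (Ψ z) = ∑ j, T (z : S → ℝ) j * Real.log (c j) :=
    fun z => hlog c hcpos _
  have hΨ'c : ∀ z : ↥N.complexes, Real.log (Ψ' z) = ∑ j, T (z : S → ℝ) j * Real.log (c' j) :=
    fun z => hlog c' hc'pos _
  rw [hΨc, hΨc, hΨ'c, hΨ'c] at hkeylog
  have hycoe : (cy : S → ℝ) = y := rfl
  have hy'coe : (cy' : S → ℝ) = y' := rfl
  rw [hycoe, hy'coe] at hkeylog
  -- hkeylog : ∑ T y * log c' + ∑ T y' * log c = ∑ T y' * log c' + ∑ T y * log c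
  have hzero : a * (Real.log (c' i) - Real.log (c i)) = 0 := by
    have collapse : ∑ j, (T y j - T y' j) * (Real.log (c' j) - Real.log (c j))
        = a * (Real.log (c' i) - Real.log (c i)) := by
      rw [Finset.sum_congr rfl (fun j _ => by rw [congrFun hT j])]
      rw [Finset.sum_congr rfl (fun j _ => by rw [Pi.single_apply, ite_mul, zero_mul])]
      rw [Finset.sum_ite_eq' Finset.univ i
        (fun j => a * (Real.log (c' j) - Real.log (c j)))]
      simp
    have expand : ∑ j, (T y j - T y' j) * (Real.log (c' j) - Real.log (c j))
        = ((∑ j, T y j * Real.log (c' j)) + ∑ j, T y' j * Real.log (c j))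
          - ((∑ j, T y' j * Real.log (c' j)) + ∑ j, T y j * Real.log (c j)) := by
      simp only [sub_mul, mul_sub, Finset.sum_sub_distrib]
      ring
    rw [← collapse, expand]
    linarith [hkeylog]
  have hlogeq : Real.log (c' i) = Real.log (c i) := by
    rcases mul_eq_zero.mp hzero with h | h
    · exact absurd h ha
    · linarith
  calc c i = Real.exp (Real.log (c i)) := (Real.exp_log (hcpos i)).symm
    _ = Real.exp (Real.log (c' i)) := by rw [hlogeq]
    _ = c' i := Real.exp_log (hc'pos i)
end
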